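/- Let B be an n×n complex matrix and suppose the pencil L_B(t) is isospectral, i.e. the characteristic polynomial of L_B(t) is independent of t ∈ ℝ. Then for all integers k, l with 1 ≤ k ≤ n and 0 ≤ l < k/2 (i.e. 2l < k), the sum over all words w : Fin k → Bool with exactly l entries equal to true of Tr(w(B,Bᴴ)) equals 0. -/

import Mathlib

open Matrix

/-- The Hermitian part `Re B = (B + Bᴴ)/2`. -/
noncomputable def reM {n : ℕ} (B : Matrix (Fin n) (Fin n) ℂ) : Matrix (Fin n) (Fin n) ℂ :=
  (1 / 2 : ℂ) • (B + Bᴴ)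

/-- The skew part `Im B = (B - Bᴴ)/(2i)`. -/
noncomputable def imM {n : ℕ} (B : Matrix (Fin n) (Fin n) ℂ) : Matrix (Fin n) (Fin n) ℂ :=
  (1 / (2 * Complex.I) : ℂ) • (B - Bᴴ)

/-- The pencil `L_B(t) = cos t ⬝ Re B + sin t ⬝ Im B = Re(e^{-it} B)`. -/
noncomputable def LB {n : ℕ} (B : Matrix (Fin n) (Fin n) ℂ) (t : ℝ) :
    Matrix (Fin n) (Fin n) ℂ :=
  (Real.cos t : ℂ) • reM B + (Real.sin t : ℂ) • imM B

/-- The pencil `L_B(t)` is isospectral: its characteristic polynomial is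
independent of `t`. -/
def Isospectral {n : ℕ} (B : Matrix (Fin n) (Fin n) ℂ) : Prop :=
  ∀ s t : ℝ, (LB B s).charpoly = (LB B t).charpoly

/-- The word `w(B, Bᴴ)`: the ordered product over `j = 0, …, k-1` of `Bᴴ` if `w j = true`
and `B` otherwise. -/
noncomputable def wordProd {n : ℕ} (B : Matrix (Fin n) (Fin n) ℂ) {k : ℕ}
    (w : Fin k → Bool) : Matrix (Fin n) (Fin n) ℂ :=
  (List.ofFn fun j => if w j then Bᴴ else B).prod

section Aux

open Polynomial

variable {n : ℕ}

lemma charpoly_unitary_conj (U : Matrix.unitaryGroup (Fin n) ℂ) (M : Matrix (Fin n) (Fin n) ℂ) :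
    Matrix.charpoly ((U : Matrix (Fin n) (Fin n) ℂ) * M * star (U : Matrix (Fin n) (Fin n) ℂ))
      = M.charpoly := by
  set f : Matrix (Fin n) (Fin n) ℂ →+* Matrix (Fin n) (Fin n) ℂ[X] :=
    (C : ℂ →+* ℂ[X]).mapMatrix with hf
  have hUU : (U : Matrix (Fin n) (Fin n) ℂ) * star (U : Matrix (Fin n) (Fin n) ℂ) = 1 :=
    Matrix.mem_unitaryGroup_iff.mp U.2
  have hUU' : star (U : Matrix (Fin n) (Fin n) ℂ) * (U : Matrix (Fin n) (Fin n) ℂ) = 1 := U.2.1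
  have hcomm : ∀ A : Matrix (Fin n) (Fin n) ℂ[X],
      Matrix.scalar (Fin n) (X : ℂ[X]) * A = A * Matrix.scalar (Fin n) (X : ℂ[X]) :=
    fun A => (Matrix.scalar_commute (X : ℂ[X]) (fun r => Commute.all _ _) A).eq
  have key : charmatrix ((U : Matrix (Fin n) (Fin n) ℂ) * M * star (U : Matrix (Fin n) (Fin n) ℂ))
      = f U * charmatrix M * f (star (U : Matrix (Fin n) (Fin n) ℂ)) := by
    unfold charmatrix
    rw [mul_sub, sub_mul]
    congr 1
    · rw [← hcomm (f U), mul_assoc, ← _root_.map_mul f, hUU, _root_.map_one f, mul_one]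
    · rw [← _root_.map_mul f, ← _root_.map_mul f]
  unfold Matrix.charpoly
  rw [key, det_mul, det_mul, mul_comm, ← mul_assoc, ← det_mul, ← _root_.map_mul f, hUU',
    _root_.map_one f, det_one, one_mul]

lemma charpoly_diagonal (d : Fin n → ℂ) :
    (diagonal d).charpoly = ∏ i, (X - C (d i)) := by
  unfold Matrix.charpoly
  have : charmatrix (diagonal d) = diagonal (fun i => (X : ℂ[X]) - C (d i)) := by
    ext i j
    by_cases hij : i = j
    · subst hij; simp
    · simp [charmatrix_apply_ne _ _ _ hij, diagonal_apply_ne _ hij, diagonal_apply_ne d hij]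
  rw [this, det_diagonal]

lemma trace_pow_hermitian {H : Matrix (Fin n) (Fin n) ℂ} (hH : H.IsHermitian) (k : ℕ) :
    (H ^ k).trace = ((H.charpoly).roots.map (· ^ k)).sum := by
  set U := hH.eigenvectorUnitary with hU
  set d : Fin n → ℂ := fun i => (hH.eigenvalues i : ℂ) with hd
  have hspec : H = (U : Matrix (Fin n) (Fin n) ℂ) * diagonal d
      * star (U : Matrix (Fin n) (Fin n) ℂ) := hH.spectral_theorem
  have hUU : (U : Matrix (Fin n) (Fin n) ℂ) * star (U : Matrix (Fin n) (Fin n) ℂ) = 1 :=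
    Matrix.mem_unitaryGroup_iff.mp U.2
  have hUU' : star (U : Matrix (Fin n) (Fin n) ℂ) * (U : Matrix (Fin n) (Fin n) ℂ) = 1 := U.2.1
  have hpow : ∀ m : ℕ, H ^ m =
      (U : Matrix (Fin n) (Fin n) ℂ) * (diagonal d) ^ m * star (U : Matrix (Fin n) (Fin n) ℂ) := by
    intro m
    induction m with
    | zero => simp [hUU]
    | succ m ih =>
        rw [pow_succ, ih, pow_succ]
        conv_lhs => rw [hspec]
        simp only [Matrix.mul_assoc]
        rw [← Matrix.mul_assoc (star (U : Matrix (Fin n) (Fin n) ℂ))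
            (U : Matrix (Fin n) (Fin n) ℂ), hUU', Matrix.one_mul]
  have hcp : H.charpoly = ∏ i, (X - C (d i)) := by
    conv_lhs => rw [hspec]
    rw [charpoly_unitary_conj, charpoly_diagonal]
  have hroots : H.charpoly.roots = Multiset.map d Finset.univ.val := by
    rw [hcp, Finset.prod_eq_multiset_prod,
      show (fun i => (X : ℂ[X]) - C (d i)) = (fun a : ℂ => X - C a) ∘ d from rfl,
      ← Multiset.map_map, Polynomial.roots_multiset_prod_X_sub_C]
  rw [hroots, Multiset.map_map, hpow, Matrix.trace_mul_cycle, hUU', Matrix.one_mul,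
    diagonal_pow, trace_diagonal]
  simp [Finset.sum_eq_multiset_sum]

lemma add_pow_words (A C : Matrix (Fin n) (Fin n) ℂ) (k : ℕ) :
    (A + C) ^ k = ∑ w : Fin k → Bool, (List.ofFn fun j => if w j then C else A).prod := by
  induction k with
  | zero =>
      simp [List.ofFn_zero]
  | succ k ih =>
      rw [pow_succ']
      rw [← Equiv.sum_comp (Fin.consEquiv (fun _ : Fin (k+1) => Bool))
        (fun w => (List.ofFn fun j => if w j then C else A).prod)]
      rw [Fintype.sum_prod_type]
      have h1 : ∀ (b : Bool) (w : Fin k → Bool),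
          (List.ofFn fun j =>
              if (Fin.consEquiv (fun _ : Fin (k+1) => Bool)) (b, w) j then C else A).prod
            = (if b then C else A) * (List.ofFn fun j => if w j then C else A).prod := by
        intro b w
        rw [List.ofFn_succ, List.prod_cons]
        simp [Fin.consEquiv, Fin.cons_succ]
      simp only [h1]
      rw [Fintype.sum_bool]
      have htrue : (if (true : Bool) = true then C else A) = C := rfl
      have hfalse : (if (false : Bool) = true then C else A) = A := rfl
      simp only [htrue, hfalse, ← Finset.mul_sum, ← ih]
      norm_num [add_comm A C, add_mul]

lemma list_prod_smul {k : ℕ} (s : Fin k → ℂ) (M : Fin k → Matrix (Fin n) (Fin n) ℂ) :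
    (List.ofFn fun j => s j • M j).prod = (∏ j, s j) • (List.ofFn M).prod := by
  induction k with
  | zero => simp
  | succ k ih =>
      rw [List.ofFn_succ, List.prod_cons, ih (fun j => s j.succ) (fun j => M j.succ),
        List.ofFn_succ (f := M), List.prod_cons, Fin.prod_univ_succ, smul_mul_assoc,
        mul_smul_comm, smul_smul]

lemma word_count_le {k : ℕ} (w : Fin k → Bool) :
    (Finset.univ.filter fun j => w j = true).card ≤ k := by
  simpa using Finset.card_filter_le Finset.univ (fun j => w j = true)

lemma word_scaled {k : ℕ} (B : Matrix (Fin n) (Fin n) ℂ) (c d : ℂ) (w : Fin k → Bool) :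
    (List.ofFn fun j => if w j then c • Bᴴ else d • B).prod
      = (c ^ (Finset.univ.filter fun j => w j = true).card
          * d ^ (k - (Finset.univ.filter fun j => w j = true).card)) •
        (List.ofFn fun j => if w j then Bᴴ else B).prod := by
  have h1 : (fun j => if w j then c • Bᴴ else d • B)
      = fun j => (if w j then c else d) • (if w j then Bᴴ else B) := by
    funext j; cases hw : w j <;> simp
  have hc := Finset.card_filter_add_card_filter_not
    (s := (Finset.univ : Finset (Fin k))) (fun j => w j = true)
  simp only [Finset.card_univ, Fintype.card_fin] at hc
  have h2 : (Finset.filter (fun x => ¬ w x = true) Finset.univ).card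
      = k - (Finset.filter (fun j => w j = true) Finset.univ).card := by omega
  rw [h1, list_prod_smul, Finset.prod_ite (fun _ => c) (fun _ => d), Finset.prod_const,
    Finset.prod_const, h2]

lemma LB_eq (B : Matrix (Fin n) (Fin n) ℂ) (t : ℝ) :
    LB B t = (Complex.exp (-(t * Complex.I)) / 2) • B
      + (Complex.exp (t * Complex.I) / 2) • Bᴴ := by
  rw [LB, reM, imM]
  have he : Complex.exp ((t : ℂ) * Complex.I) = Real.cos t + Real.sin t * Complex.I := by
    rw [Complex.exp_mul_I, Complex.ofReal_cos, Complex.ofReal_sin]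
  have he' : Complex.exp (-((t : ℂ) * Complex.I)) = Real.cos t - Real.sin t * Complex.I := by
    rw [← neg_mul, Complex.exp_mul_I, Complex.cos_neg, Complex.sin_neg, Complex.ofReal_cos,
      Complex.ofReal_sin, neg_mul]
    ring
  match_scalars
  · rw [he']
    field_simp
    rw [Complex.ofReal_cos, Complex.ofReal_sin]
    linear_combination (Complex.sin (t:ℂ)) * Complex.I_sq
  · rw [he]
    field_simp
    rw [Complex.ofReal_cos, Complex.ofReal_sin]
    linear_combination (-Complex.sin (t:ℂ)) * Complex.I_sq

lemma LB_isHermitian (B : Matrix (Fin n) (Fin n) ℂ) (t : ℝ) : (LB B t).IsHermitian := by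
  rw [LB_eq]
  unfold Matrix.IsHermitian
  rw [conjTranspose_add, conjTranspose_smul, conjTranspose_smul, conjTranspose_conjTranspose]
  have h1 : star (Complex.exp (-((t:ℂ) * Complex.I)) / 2)
      = Complex.exp ((t:ℂ) * Complex.I) / 2 := by
    simp [Complex.star_def, ← Complex.exp_conj, _root_.map_mul, Complex.conj_I, Complex.conj_ofReal]
  have h2 : star (Complex.exp ((t:ℂ) * Complex.I) / 2)
      = Complex.exp (-((t:ℂ) * Complex.I)) / 2 := by
    simp [Complex.star_def, ← Complex.exp_conj, _root_.map_mul, Complex.conj_I, Complex.conj_ofReal]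
  rw [h1, h2, add_comm]

end Aux

section Main

open Polynomial

variable {n : ℕ}

/-- The sum of traces of words with `m` conjugate-transposes among `k` letters. -/
noncomputable def Scount (B : Matrix (Fin n) (Fin n) ℂ) (k m : ℕ) : ℂ :=
  ∑ w ∈ Finset.univ.filter
      (fun w : Fin k → Bool => (Finset.univ.filter fun j => w j = true).card = m),
    (wordProd B w).trace

/-- The generating polynomial of the word trace sums. -/
noncomputable def Ppoly (B : Matrix (Fin n) (Fin n) ℂ) (k : ℕ) : ℂ[X] :=
  ∑ m ∈ Finset.range (k+1), C (Scount B k m) * X ^ m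

lemma scalar_word (e : ℂ) (he : e ≠ 0) (k c : ℕ) (hc : c ≤ k) :
    (2:ℂ)^k * e^k * ((e/2)^c * (e⁻¹/2)^(k-c)) = (e^2)^c := by
  obtain ⟨m, rfl⟩ : ∃ m, k = c + m := ⟨k - c, by omega⟩
  have h : c + m - c = m := by omega
  rw [h]
  rw [div_pow, div_pow, inv_pow]
  field_simp
  ring

lemma eval_Ppoly (B : Matrix (Fin n) (Fin n) ℂ) (k : ℕ) (t : ℝ) :
    (Ppoly B k).eval (Complex.exp ((t:ℂ) * Complex.I) ^ 2)
      = (2:ℂ)^k * Complex.exp ((t:ℂ) * Complex.I)^k * ((LB B t)^k).trace := by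
  set e := Complex.exp ((t:ℂ) * Complex.I) with hedef
  have hene : e ≠ 0 := Complex.exp_ne_zero _
  have hinv : Complex.exp (-((t:ℂ) * Complex.I)) = e⁻¹ := by rw [Complex.exp_neg]
  have hexp : ((LB B t)^k).trace
      = ∑ w : Fin k → Bool,
          ((e/2)^((Finset.univ.filter fun j => w j = true).card)
            * (e⁻¹/2)^(k - (Finset.univ.filter fun j => w j = true).card))
            * (wordProd B w).trace := by
    rw [LB_eq, hinv, add_pow_words, Matrix.trace_sum]
    refine Finset.sum_congr rfl fun w _ => ?_
    rw [word_scaled, Matrix.trace_smul, smul_eq_mul, wordProd]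
  rw [hexp, Finset.mul_sum]
  have hterm : ∀ w : Fin k → Bool,
      (2:ℂ)^k * e^k * (((e/2)^((Finset.univ.filter fun j => w j = true).card)
          * (e⁻¹/2)^(k - (Finset.univ.filter fun j => w j = true).card))
          * (wordProd B w).trace)
        = (e^2)^((Finset.univ.filter fun j => w j = true).card) * (wordProd B w).trace := by
    intro w
    rw [← mul_assoc, scalar_word e hene k _ (word_count_le w)]
  simp only [hterm]
  rw [← Finset.sum_fiberwise_of_maps_to
    (g := fun w : Fin k → Bool => (Finset.univ.filter fun j => w j = true).card)
    (t := Finset.range (k+1))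
    (fun w _ => Finset.mem_range.mpr (Nat.lt_succ_of_le (word_count_le w)))
    (fun w => (e^2)^((Finset.univ.filter fun j => w j = true).card) * (wordProd B w).trace)]
  rw [Ppoly, eval_finset_sum]
  refine Finset.sum_congr rfl fun m hm => ?_
  rw [eval_mul, eval_C, eval_pow, eval_X, Scount, Finset.sum_mul]
  refine Finset.sum_congr rfl fun w hw => ?_
  rw [(Finset.mem_filter.mp hw).2]
  ring

end Main

section Final

open Polynomial

lemma exp_mul_I_injOn : Set.InjOn (fun s : ℝ => Complex.exp ((s:ℂ) * Complex.I))
    (Set.Ioo 0 1) := by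
  intro a ha b hb hab
  dsimp at hab
  have h1 : Complex.exp (((a - b : ℝ) : ℂ) * Complex.I) = 1 := by
    rw [Complex.ofReal_sub, sub_mul, Complex.exp_sub, hab, div_self (Complex.exp_ne_zero _)]
  rw [Complex.exp_eq_one_iff] at h1
  obtain ⟨m, hm⟩ := h1
  have h2 : ((a - b : ℝ) : ℂ) = (m : ℂ) * (2 * (Real.pi : ℂ)) := by
    apply mul_right_cancel₀ Complex.I_ne_zero
    rw [hm]; ring
  have h3 : a - b = (m : ℝ) * (2 * Real.pi) := by exact_mod_cast h2
  have hm0 : m = 0 := by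
    by_contra hm0
    have h4 : (1:ℝ) ≤ |(m:ℝ)| := by
      rw [← Int.cast_abs]
      exact_mod_cast Int.one_le_abs hm0
    have hpi := Real.pi_gt_three
    simp only [Set.mem_Ioo] at ha hb
    have h5 : |a - b| < 1 := by
      rw [abs_lt]
      exact ⟨by linarith [ha.1, ha.2, hb.1, hb.2], by linarith [ha.1, ha.2, hb.1, hb.2]⟩
    have h6 : |a - b| = |(m:ℝ)| * (2*Real.pi) := by
      rw [h3, abs_mul, abs_of_pos Real.two_pi_pos]
    nlinarith
  rw [hm0] at h3
  push_cast at h3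
  linarith


/-- isospectrality implies the vanishing of the sums of traces of words
with `l` appearances of `Bᴴ` among `k` letters, whenever `2l < k ≤ n`. -/
theorem isospectral_implies_word_trace_sums_zero (n : ℕ) (B : Matrix (Fin n) (Fin n) ℂ)
    (h : Isospectral B) :
    ∀ k l : ℕ, 1 ≤ k → k ≤ n → 2 * l < k →
      ∑ w ∈ Finset.univ.filter
          (fun w : Fin k → Bool => (Finset.univ.filter fun j => w j = true).card = l),
        (wordProd B w).trace = 0 := by
  intro k l hk1 hkn hlk
  have hconst : ∀ t : ℝ, ((LB B t)^k).trace = ((LB B 0)^k).trace := by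
    intro t
    rw [trace_pow_hermitian (LB_isHermitian B t), trace_pow_hermitian (LB_isHermitian B 0), h t 0]
  set c₀ := ((LB B 0)^k).trace with hc0
  have hval : ∀ t : ℝ, (Ppoly B k).eval (Complex.exp ((t:ℂ)*Complex.I)^2)
      = (2:ℂ)^k * Complex.exp ((t:ℂ)*Complex.I)^k * c₀ := by
    intro t
    rw [eval_Ppoly, hconst t]
  set Q : ℂ[X] := (Ppoly B k)^2 - C (((2:ℂ)^k * c₀)^2) * X^k with hQdef
  have hQroot : ∀ t : ℝ, Q.eval (Complex.exp ((t:ℂ)*Complex.I)^2) = 0 := by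
    intro t
    rw [hQdef]
    simp only [eval_sub, eval_mul, eval_C, eval_pow, eval_X, hval t]
    ring
  have hQ0 : Q = 0 := by
    apply Polynomial.eq_zero_of_infinite_isRoot
    have hinf := (Set.Ioo_infinite (by norm_num : (0:ℝ) < 1)).image exp_mul_I_injOn
    refine hinf.mono ?_
    rintro x ⟨s, hs, rfl⟩
    show Q.IsRoot _
    rw [Polynomial.IsRoot]
    have hh := hQroot (s/2)
    have he2 : Complex.exp (((s/2 : ℝ):ℂ)*Complex.I)^2 = Complex.exp (((s:ℝ):ℂ) * Complex.I) := by
      rw [sq, ← Complex.exp_add]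
      push_cast
      ring_nf
    rw [he2] at hh
    exact hh
  have hP2 : (Ppoly B k)^2 = C (((2:ℂ)^k * c₀)^2) * X^k := by
    have := sub_eq_zero.mp (hQdef ▸ hQ0)
    exact this
  have hvan : ∀ m, 2*m < k → (Ppoly B k).coeff m = 0 := by
    intro m
    induction m using Nat.strong_induction_on with
    | _ m IH =>
      intro hmk
      have h0 : ((Ppoly B k)^2).coeff (2*m) = 0 := by
        rw [hP2, coeff_C_mul, coeff_X_pow, if_neg (by omega), mul_zero]
      rw [sq, coeff_mul] at h0
      rw [Finset.sum_eq_single (m, m)] at h0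
      · exact mul_self_eq_zero.mp h0
      · intro b hb hne
        have hb' := Finset.HasAntidiagonal.mem_antidiagonal.mp hb
        have hne' : b.1 ≠ m ∨ b.2 ≠ m := by
          by_contra hcon
          push_neg at hcon
          exact hne (Prod.ext hcon.1 hcon.2)
        have : b.1 < m ∨ b.2 < m := by omega
        rcases this with hlt|hlt
        · rw [IH b.1 hlt (by omega), zero_mul]
        · rw [IH b.2 hlt (by omega), mul_zero]
      · intro habs
        exact absurd (Finset.HasAntidiagonal.mem_antidiagonal.mpr (by omega)) habs
  have hcoeff : (Ppoly B k).coeff l = Scount B k l := by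
    rw [Ppoly, finset_sum_coeff]
    rw [Finset.sum_eq_single l]
    · rw [coeff_C_mul, coeff_X_pow, if_pos rfl, mul_one]
    · intro b hb hne
      rw [coeff_C_mul, coeff_X_pow, if_neg (Ne.symm hne), mul_zero]
    · intro habs
      exact absurd (Finset.mem_range.mpr (by omega)) habs
  have hfin := hvan l hlk
  rw [hcoeff] at hfin
  exact hfin

end Final
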